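/- Let B be an invertible real 2×2 matrix, a ∈ ℝ², F(x̂) = B x̂ + a, and J := det B. Let Û ⊆ ℝ² be open and let M̂ : Û → ℝ^{2×2} be twice continuously differentiable. Define the Piola–Kirchhoff transform M on F(Û) by M(F(x̂)) := |J|⁻¹ B M̂(x̂) Bᵀ. Then for every x̂ ∈ Û, |J| · (div Div M)(F(x̂)) = (div Div M̂)(x̂). -/

import Mathlib

/-- The `i`-th partial derivative of a scalar field on `ℝ²`. -/
noncomputable def pd (i : Fin 2) (f : (Fin 2 → ℝ) → ℝ) (x : Fin 2 → ℝ) : ℝ :=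
  fderiv ℝ f x (Pi.single i 1)

/-- The twice iterated divergence `div Div N = Σ_{i,j} ∂_i ∂_j N_{ij}` of a matrix field. -/
noncomputable def divDiv (N : (Fin 2 → ℝ) → Matrix (Fin 2) (Fin 2) ℝ) (x : Fin 2 → ℝ) : ℝ :=
  ∑ i : Fin 2, ∑ j : Fin 2, pd i (pd j (fun y => N y i j)) x

lemma clm_apply_eq_sum (φ : (Fin 2 → ℝ) →L[ℝ] ℝ) (v : Fin 2 → ℝ) :
    φ v = ∑ m : Fin 2, v m * φ (Pi.single m 1) := by
  have hv : v = ∑ m : Fin 2, v m • (Pi.single m 1 : Fin 2 → ℝ) := by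
    funext j
    rw [Finset.sum_apply]
    simp [Pi.single_apply]
  conv_lhs => rw [hv]
  rw [map_sum]
  simp [smul_eq_mul]

lemma pd_congr {f g : (Fin 2 → ℝ) → ℝ} {x : Fin 2 → ℝ} (h : f =ᶠ[nhds x] g) (i : Fin 2) :
    pd i f x = pd i g x := by
  unfold pd; rw [h.fderiv_eq]

lemma pd_const_mul {h : (Fin 2 → ℝ) → ℝ} {x : Fin 2 → ℝ} (hh : DifferentiableAt ℝ h x)
    (c : ℝ) (m : Fin 2) : pd m (fun y => c * h y) x = c * pd m h x := by
  unfold pd; rw [fderiv_const_mul hh]; simp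

lemma pd_sum {ι : Type*} (s : Finset ι) {g : ι → (Fin 2 → ℝ) → ℝ} {x : Fin 2 → ℝ}
    (hg : ∀ k ∈ s, DifferentiableAt ℝ (g k) x) (m : Fin 2) :
    pd m (fun y => ∑ k ∈ s, g k y) x = ∑ k ∈ s, pd m (g k) x := by
  unfold pd; rw [fderiv_fun_sum hg]; simp

noncomputable def affL (C : Matrix (Fin 2) (Fin 2) ℝ) : (Fin 2 → ℝ) →L[ℝ] (Fin 2 → ℝ) :=
  LinearMap.toContinuousLinearMap (Matrix.mulVecLin C)

lemma hasFDerivAt_aff (C : Matrix (Fin 2) (Fin 2) ℝ) (a : Fin 2 → ℝ) (y : Fin 2 → ℝ) :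
    HasFDerivAt (fun z => C.mulVec (z - a)) (affL C) y := by
  have h1 : HasFDerivAt (fun z : Fin 2 → ℝ => z - a) (ContinuousLinearMap.id ℝ (Fin 2 → ℝ)) y :=
    (hasFDerivAt_id y).sub_const a
  have h2 := ((affL C).hasFDerivAt (x := y - a)).comp y h1
  simpa [affL, Function.comp] using h2

lemma diff_aff_comp {C : Matrix (Fin 2) (Fin 2) ℝ} {a : Fin 2 → ℝ} {f : (Fin 2 → ℝ) → ℝ}
    {y : Fin 2 → ℝ} (hf : DifferentiableAt ℝ f (C.mulVec (y - a))) :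
    DifferentiableAt ℝ (fun z => f (C.mulVec (z - a))) y :=
  hf.comp y (hasFDerivAt_aff C a y).differentiableAt

lemma pd_chain (C : Matrix (Fin 2) (Fin 2) ℝ) (a : Fin 2 → ℝ) {f : (Fin 2 → ℝ) → ℝ}
    {y : Fin 2 → ℝ} (hf : DifferentiableAt ℝ f (C.mulVec (y - a))) (j : Fin 2) :
    pd j (fun z => f (C.mulVec (z - a))) y = ∑ m : Fin 2, C m j * pd m f (C.mulVec (y - a)) := by
  have hc : HasFDerivAt (fun z => f (C.mulVec (z - a)))
      ((fderiv ℝ f (C.mulVec (y - a))).comp (affL C)) y :=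
    hf.hasFDerivAt.comp y (hasFDerivAt_aff C a y)
  unfold pd
  rw [hc.fderiv]
  have hsingle : affL C (Pi.single j 1) = fun m => C m j := by
    funext m
    simp [affL, Matrix.mulVecLin, Matrix.mulVec, dotProduct, Pi.single_apply]
  rw [ContinuousLinearMap.comp_apply, hsingle]
  rw [clm_apply_eq_sum]

lemma pd_contDiffOn {U : Set (Fin 2 → ℝ)} (hU : IsOpen U) {F' : (Fin 2 → ℝ) → ℝ}
    (h : ContDiffOn ℝ 2 F' U) (m : Fin 2) : ContDiffOn ℝ 1 (pd m F') U := by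
  have h2 : ContDiffOn ℝ 1 (fderiv ℝ F') U := h.fderiv_of_isOpen hU (by norm_num)
  exact h2.clm_apply contDiffOn_const

lemma alg (B C : Matrix (Fin 2) (Fin 2) ℝ) (h : C * B = 1) (c e : ℝ) (hec : e * c = 1)
    (S : Fin 2 → Fin 2 → Fin 2 → Fin 2 → ℝ) :
    e * ∑ i : Fin 2, ∑ j : Fin 2, ∑ m : Fin 2, C m j * ∑ n : Fin 2, C n i *
      (c * ∑ k : Fin 2, ∑ l : Fin 2, B i k * B j l * S n m k l)
    = ∑ i : Fin 2, ∑ j : Fin 2, S i j i j := by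
  have hval : ∀ n k : Fin 2, C n 0 * B 0 k + C n 1 * B 1 k = (1 : Matrix (Fin 2) (Fin 2) ℝ) n k := by
    intro n k
    rw [← h, Matrix.mul_apply, Fin.sum_univ_two]
  have h00 : C 0 0 * B 0 0 + C 0 1 * B 1 0 = 1 := by simpa using hval 0 0
  have h01 : C 0 0 * B 0 1 + C 0 1 * B 1 1 = 0 := by simpa [Matrix.one_apply] using hval 0 1
  have h10 : C 1 0 * B 0 0 + C 1 1 * B 1 0 = 0 := by simpa [Matrix.one_apply] using hval 1 0
  have h11 : C 1 0 * B 0 1 + C 1 1 * B 1 1 = 1 := by simpa using hval 1 1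
  have he : e * c = 1 := hec
  simp only [Fin.sum_univ_two]
  linear_combination ((C 0 0 * B 0 0 + C 0 1 * B 1 0) * (C 0 0 * B 0 0 + C 0 1 * B 1 0) * S 0 0 0 0 + (C 0 0 * B 0 0 + C 0 1 * B 1 0) * (C 0 0 * B 0 1 + C 0 1 * B 1 1) * S 0 0 0 1 + (C 0 0 * B 0 1 + C 0 1 * B 1 1) * (C 0 0 * B 0 0 + C 0 1 * B 1 0) * S 0 0 1 0 + (C 0 0 * B 0 1 + C 0 1 * B 1 1) * (C 0 0 * B 0 1 + C 0 1 * B 1 1) * S 0 0 1 1 + (C 0 0 * B 0 0 + C 0 1 * B 1 0) * (C 1 0 * B 0 0 + C 1 1 * B 1 0) * S 0 1 0 0 + (C 0 0 * B 0 0 + C 0 1 * B 1 0) * (C 1 0 * B 0 1 + C 1 1 * B 1 1) * S 0 1 0 1 + (C 0 0 * B 0 1 + C 0 1 * B 1 1) * (C 1 0 * B 0 0 + C 1 1 * B 1 0) * S 0 1 1 0 + (C 0 0 * B 0 1 + C 0 1 * B 1 1) * (C 1 0 * B 0 1 + C 1 1 * B 1 1) * S 0 1 1 1 + (C 1 0 *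 B 0 0 + C 1 1 * B 1 0) * (C 0 0 * B 0 0 + C 0 1 * B 1 0) * S 1 0 0 0 + (C 1 0 * B 0 0 + C 1 1 * B 1 0) * (C 0 0 * B 0 1 + C 0 1 * B 1 1) * S 1 0 0 1 + (C 1 0 * B 0 1 + C 1 1 * B 1 1) * (C 0 0 * B 0 0 + C 0 1 * B 1 0) * S 1 0 1 0 + (C 1 0 * B 0 1 + C 1 1 * B 1 1) * (C 0 0 * B 0 1 + C 0 1 * B 1 1) * S 1 0 1 1 + (C 1 0 * B 0 0 + C 1 1 * B 1 0) * (C 1 0 * B 0 0 + C 1 1 * B 1 0) * S 1 1 0 0 + (C 1 0 * B 0 0 + C 1 1 * B 1 0) * (C 1 0 * B 0 1 + C 1 1 * B 1 1) * S 1 1 0 1 + (C 1 0 * B 0 1 + C 1 1 * B 1 1) * (C 1 0 * B 0 0 + C 1 1 * B 1 0) * S 1 1 1 0 + (C 1 0 * B 0 1 + C 1 1 * B 1 1) * (C 1 0 * B 0 1 + C 1 1 * B 1 1) * S 1 1 1 1) * he + ((C 0 0 * B 0 0 + C 0 1 * B 1 0) * S 0 0 0 0 + (C 0 0 * B 0 1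 + C 0 1 * B 1 1) * S 0 0 0 1 + (C 1 0 * B 0 0 + C 1 1 * B 1 0) * S 0 1 0 0 + (C 1 0 * B 0 1 + C 1 1 * B 1 1) * S 0 1 0 1) * h00 + ((C 0 0 * B 0 0 + C 0 1 * B 1 0) * S 0 0 1 0 + (C 0 0 * B 0 1 + C 0 1 * B 1 1) * S 0 0 1 1 + (C 1 0 * B 0 0 + C 1 1 * B 1 0) * S 0 1 1 0 + (C 1 0 * B 0 1 + C 1 1 * B 1 1) * S 0 1 1 1) * h01 + ((C 0 0 * B 0 0 + C 0 1 * B 1 0) * S 1 0 0 0 + (C 0 0 * B 0 1 + C 0 1 * B 1 1) * S 1 0 0 1 + (C 1 0 * B 0 0 + C 1 1 * B 1 0) * S 1 1 0 0 + (C 1 0 * B 0 1 + C 1 1 * B 1 1) * S 1 1 0 1) * h10 + ((C 0 0 * B 0 0 + C 0 1 * B 1 0) * S 1 0 1 0 + (C 0 0 * B 0 1 + C 0 1 * B 1 1) * S 1 0 1 1 + (C 1 0 * B 0 0 + C 1 1 * B 1 0) * S 1 1 1 0 + (C 1 0 * B 0 1 + C 1 1 * B 1 1) * S 1 1 1 1)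 * h11 + (S 0 0 0 0 + S 1 0 1 0) * h00 + (S 0 0 0 1 + S 1 0 1 1) * h01 + (S 0 1 0 0 + S 1 1 1 0) * h10 + (S 0 1 0 1 + S 1 1 1 1) * h11

/-- The Piola–Kirchhoff transformation `M(F x̂) = |J|⁻¹ B M̂(x̂) Bᵀ`
satisfies `|J| (div Div M)(F x̂) = (div Div M̂)(x̂)` (Lemma 8, first identity, smooth case).
Here `Mhat` plays the role of `M̂`, `Uhat` of `Û` and `xhat` of `x̂`. -/
theorem stmt5
    (B : Matrix (Fin 2) (Fin 2) ℝ) (hB : IsUnit B.det) (a : Fin 2 → ℝ)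
    (F : (Fin 2 → ℝ) → (Fin 2 → ℝ)) (hF : ∀ xhat, F xhat = B.mulVec xhat + a)
    (Uhat : Set (Fin 2 → ℝ)) (hUhat : IsOpen Uhat)
    (Mhat M : (Fin 2 → ℝ) → Matrix (Fin 2) (Fin 2) ℝ)
    (hsmooth : ∀ i j : Fin 2, ContDiffOn ℝ 2 (fun x => Mhat x i j) Uhat)
    (hM : ∀ xhat ∈ Uhat, M (F xhat) = |B.det|⁻¹ • (B * Mhat xhat * B.transpose)) :
    ∀ xhat ∈ Uhat, |B.det| * divDiv M (F xhat) = divDiv Mhat xhat := by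
  intro xhat hx
  have hJ : B.det ≠ 0 := by
    intro h0
    rw [h0] at hB
    simp at hB
  have hJa : |B.det| ≠ 0 := abs_ne_zero.mpr hJ
  set c : ℝ := |B.det|⁻¹ with hcdef
  have hec : |B.det| * c = 1 := mul_inv_cancel₀ hJa
  set C := B⁻¹ with hCdef
  have hCB : C * B = 1 := Matrix.nonsing_inv_mul B hB
  have hBC : B * C = 1 := Matrix.mul_nonsing_inv B hB
  have hGF : ∀ x, C.mulVec (F x - a) = x := by
    intro x
    rw [hF, add_sub_cancel_right, Matrix.mulVec_mulVec, hCB, Matrix.one_mulVec]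
  have hFG : ∀ y, F (C.mulVec (y - a)) = y := by
    intro y
    rw [hF, Matrix.mulVec_mulVec, hBC, Matrix.one_mulVec, sub_add_cancel]
  -- the open set V = G ⁻¹' Uhat
  set V : Set (Fin 2 → ℝ) := (fun y => C.mulVec (y - a)) ⁻¹' Uhat with hVdef
  have hGcont : Continuous (fun y : Fin 2 → ℝ => C.mulVec (y - a)) := by
    have h1 : Continuous (fun y : Fin 2 → ℝ => affL C (y - a)) :=
      (affL C).continuous.comp (continuous_id.sub continuous_const)
    simpa [affL] using h1
  have hV : IsOpen V := hUhat.preimage hGcont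
  have hFxV : F xhat ∈ V := by
    simp only [hVdef, Set.mem_preimage, hGF]
    exact hx
  have hVmem : ∀ y ∈ V, C.mulVec (y - a) ∈ Uhat := fun y hy => hy
  -- scalar component fields
  set g : Fin 2 → Fin 2 → (Fin 2 → ℝ) → ℝ := fun k l x => Mhat x k l with hgdef
  set f : Fin 2 → Fin 2 → (Fin 2 → ℝ) → ℝ :=
    fun i j x => c * ∑ k : Fin 2, ∑ l : Fin 2, B i k * B j l * g k l x with hfdef
  -- M agrees with f ∘ G on V
  have hMf : ∀ y ∈ V, ∀ i j : Fin 2, M y i j = f i j (C.mulVec (y - a)) := by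
    intro y hy i j
    have h1 := hM (C.mulVec (y - a)) (hVmem y hy)
    rw [hFG y] at h1
    rw [h1]
    simp only [hfdef, hgdef, Matrix.smul_apply, smul_eq_mul]
    congr 1
    simp [Matrix.mul_apply, Matrix.transpose_apply, Fin.sum_univ_two]
    ring
  -- differentiability facts
  have hgdiff : ∀ k l : Fin 2, ∀ x ∈ Uhat, DifferentiableAt ℝ (g k l) x := by
    intro k l x hx'
    exact ((hsmooth k l).differentiableOn (by norm_num)).differentiableAt (hUhat.mem_nhds hx')
  have hf2 : ∀ i j : Fin 2, ContDiffOn ℝ 2 (f i j) Uhat := by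
    intro i j
    apply ContDiffOn.mul contDiffOn_const
    apply ContDiffOn.sum
    intro k _
    apply ContDiffOn.sum
    intro l _
    exact contDiffOn_const.mul (hsmooth k l)
  have hfdiff : ∀ i j : Fin 2, ∀ x ∈ Uhat, DifferentiableAt ℝ (f i j) x := by
    intro i j x hx'
    exact ((hf2 i j).differentiableOn (by norm_num)).differentiableAt (hUhat.mem_nhds hx')
  have hpdgdiff : ∀ k l m : Fin 2, ∀ x ∈ Uhat, DifferentiableAt ℝ (pd m (g k l)) x := by
    intro k l m x hx'
    exact ((pd_contDiffOn hUhat (hsmooth k l) m).differentiableOn one_ne_zero).differentiableAt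
      (hUhat.mem_nhds hx')
  have hpdfdiff : ∀ i j m : Fin 2, ∀ x ∈ Uhat, DifferentiableAt ℝ (pd m (f i j)) x := by
    intro i j m x hx'
    exact ((pd_contDiffOn hUhat (hf2 i j) m).differentiableOn one_ne_zero).differentiableAt
      (hUhat.mem_nhds hx')
  -- first derivative of f is the linear combination of derivatives of g
  have lin1 : ∀ i j m : Fin 2, ∀ x ∈ Uhat,
      pd m (f i j) x = c * ∑ k : Fin 2, ∑ l : Fin 2, B i k * B j l * pd m (g k l) x := by
    intro i j m x hx'
    have hd : DifferentiableAt ℝ (fun y => ∑ k : Fin 2, ∑ l : Fin 2, B i k * B j l * g k l y) x := by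
      apply DifferentiableAt.fun_sum
      intro k _
      apply DifferentiableAt.fun_sum
      intro l _
      exact (hgdiff k l x hx').const_mul _
    have h1 : pd m (f i j) x
        = c * pd m (fun y => ∑ k : Fin 2, ∑ l : Fin 2, B i k * B j l * g k l y) x :=
      pd_const_mul hd c m
    rw [h1]
    congr 1
    rw [pd_sum Finset.univ (fun k _ => by
      apply DifferentiableAt.fun_sum
      intro l _
      exact (hgdiff k l x hx').const_mul _) m]
    apply Finset.sum_congr rfl
    intro k _
    rw [pd_sum Finset.univ (fun l _ => (hgdiff k l x hx').const_mul _) m]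
    apply Finset.sum_congr rfl
    intro l _
    exact pd_const_mul (hgdiff k l x hx') _ m
  -- second derivative of f
  have lin2 : ∀ i j n m : Fin 2,
      pd n (pd m (f i j)) xhat
        = c * ∑ k : Fin 2, ∑ l : Fin 2, B i k * B j l * pd n (pd m (g k l)) xhat := by
    intro i j n m
    have hEq : pd m (f i j)
        =ᶠ[nhds xhat] (fun x => c * ∑ k : Fin 2, ∑ l : Fin 2, B i k * B j l * pd m (g k l) x) :=
      Filter.eventuallyEq_of_mem (hUhat.mem_nhds hx) (fun x hx' => lin1 i j m x hx')
    rw [pd_congr hEq n]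
    have hd : DifferentiableAt ℝ
        (fun y => ∑ k : Fin 2, ∑ l : Fin 2, B i k * B j l * pd m (g k l) y) xhat := by
      apply DifferentiableAt.fun_sum
      intro k _
      apply DifferentiableAt.fun_sum
      intro l _
      exact (hpdgdiff k l m xhat hx).const_mul _
    rw [pd_const_mul hd c n]
    congr 1
    rw [pd_sum Finset.univ (fun k _ => by
      apply DifferentiableAt.fun_sum
      intro l _
      exact (hpdgdiff k l m xhat hx).const_mul _) n]
    apply Finset.sum_congr rfl
    intro k _
    rw [pd_sum Finset.univ (fun l _ => (hpdgdiff k l m xhat hx).const_mul _) n]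
    apply Finset.sum_congr rfl
    intro l _
    exact pd_const_mul (hpdgdiff k l m xhat hx) _ n
  -- main computation for each component
  have main : ∀ i j : Fin 2,
      pd i (pd j (fun y => M y i j)) (F xhat)
        = ∑ m : Fin 2, C m j * ∑ n : Fin 2, C n i * pd n (pd m (f i j)) xhat := by
    intro i j
    -- step A : on V, pd j (M · i j) equals the chain-rule expression
    have stepA : ∀ y ∈ V,
        pd j (fun z => M z i j) y
          = ∑ m : Fin 2, C m j * pd m (f i j) (C.mulVec (y - a)) := by
      intro y hy
      have hE : (fun z => M z i j) =ᶠ[nhds y] (fun z => f i j (C.mulVec (z - a))) :=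
        Filter.eventuallyEq_of_mem (hV.mem_nhds hy) (fun z hz => hMf z hz i j)
      rw [pd_congr hE j]
      exact pd_chain C a (hfdiff i j _ (hVmem y hy)) j
    -- step B : replace inner function by the chain-rule expression near F xhat
    have hE2 : pd j (fun z => M z i j)
        =ᶠ[nhds (F xhat)] (fun y => ∑ m : Fin 2, C m j * pd m (f i j) (C.mulVec (y - a))) :=
      Filter.eventuallyEq_of_mem (hV.mem_nhds hFxV) stepA
    rw [pd_congr hE2 i]
    -- step C : push pd i through the sum and the constants
    have hdm : ∀ m : Fin 2,
        DifferentiableAt ℝ (fun y => pd m (f i j) (C.mulVec (y - a))) (F xhat) := by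
      intro m
      apply diff_aff_comp
      rw [hGF xhat]
      exact hpdfdiff i j m xhat hx
    rw [pd_sum Finset.univ (fun m _ => (hdm m).const_mul _) i]
    apply Finset.sum_congr rfl
    intro m _
    rw [pd_const_mul (hdm m) _ i]
    congr 1
    -- step D : chain rule once more
    have hchain := pd_chain C a (f := pd m (f i j)) (y := F xhat)
      (by rw [hGF xhat]; exact hpdfdiff i j m xhat hx) i
    rw [hchain, hGF xhat]
  -- assemble
  have hdivM : divDiv M (F xhat)
      = ∑ i : Fin 2, ∑ j : Fin 2, ∑ m : Fin 2, C m j * ∑ n : Fin 2, C n i *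
          (c * ∑ k : Fin 2, ∑ l : Fin 2, B i k * B j l * pd n (pd m (g k l)) xhat) := by
    unfold divDiv
    apply Finset.sum_congr rfl
    intro i _
    apply Finset.sum_congr rfl
    intro j _
    rw [main i j]
    apply Finset.sum_congr rfl
    intro m _
    congr 1
    apply Finset.sum_congr rfl
    intro n _
    rw [lin2 i j n m]
  have hdivMhat : divDiv Mhat xhat
      = ∑ i : Fin 2, ∑ j : Fin 2, pd i (pd j (g i j)) xhat := rfl
  rw [hdivM, hdivMhat]
  exact alg B C hCB c |B.det| hec (fun n m k l => pd n (pd m (g k l)) xhat)
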